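/- Let e₀ ∈ ℝ² be a unit vector, let l₀ = {λe₀ : λ ≥ 0}, let Ω ⊆ ℝ² be a closed set with dist(l₀, Ω) > 0, let d ∈ ℝ² be a fixed point, and let (ω_k) be a sequence in Ω such that ω_k/‖ω_k‖ → e₀. Then ‖ω_k‖ → ∞ and the angle α_k between the vector ω_k − d and the direction e₀ tends to 0 (equivalently, ⟨e₀, (ω_k − d)/‖ω_k − d‖⟩ → 1). -/

import Mathlib

open Filter Topology

/-- Let `e₀` be a unit vector in the Euclidean plane, `l₀ = ℝ₊e₀`, let `Ω` be a
closed set with `dist(l₀, Ω) > 0`, let `d` be a fixed point, and let `(ω_k)` be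
a sequence in `Ω` with `ω_k/‖ω_k‖ → e₀`.  Then `‖ω_k‖ → ∞` and the angle `α_k`
between `ω_k − d` and `e₀` tends to `0`, i.e.
`⟨e₀, (ω_k − d)/‖ω_k − d‖⟩ → 1`. -/
theorem norm_tendsto_atTop_and_angle_tendsto_zero
    (e₀ d : EuclideanSpace ℝ (Fin 2)) (he₀ : ‖e₀‖ = 1)
    (Ω : Set (EuclideanSpace ℝ (Fin 2))) (hΩcl : IsClosed Ω)
    (hdist : ∃ ε : ℝ, 0 < ε ∧ ∀ t : ℝ, 0 ≤ t → ∀ b ∈ Ω, ε ≤ dist (t • e₀) b)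
    (ω : ℕ → EuclideanSpace ℝ (Fin 2)) (hω : ∀ k, ω k ∈ Ω)
    (hconv : Tendsto (fun k => ‖ω k‖⁻¹ • ω k) atTop (𝓝 e₀)) :
    Tendsto (fun k => ‖ω k‖) atTop atTop ∧
      Tendsto (fun k => (inner ℝ e₀ (‖ω k - d‖⁻¹ • (ω k - d)) : ℝ))
        atTop (𝓝 1) := by
  obtain ⟨ε, hε, hεd⟩ := hdist
  have hnorm : ∀ k, ε ≤ ‖ω k‖ := by
    intro k
    have := hεd 0 le_rfl (ω k) (hω k)
    simpa [dist_eq_norm] using this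
  have hpos : ∀ k, 0 < ‖ω k‖ := fun k => lt_of_lt_of_le hε (hnorm k)
  set δ : ℕ → ℝ := fun k => ‖e₀ - ‖ω k‖⁻¹ • ω k‖ with hδdef
  have hδ0 : Tendsto δ atTop (𝓝 0) := by
    have h : Tendsto (fun k => e₀ - ‖ω k‖⁻¹ • ω k) atTop (𝓝 (e₀ - e₀)) :=
      tendsto_const_nhds.sub hconv
    simpa [hδdef] using h.norm
  have hkey : ∀ k, ε ≤ ‖ω k‖ * δ k := by
    intro k
    have h1 := hεd ‖ω k‖ (hpos k).le (ω k) (hω k)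
    have h2 : dist (‖ω k‖ • e₀) (ω k) = ‖ω k‖ * δ k := by
      rw [dist_eq_norm]
      have h3 : ‖ω k‖ • e₀ - ω k = ‖ω k‖ • (e₀ - ‖ω k‖⁻¹ • ω k) := by
        rw [smul_sub, smul_inv_smul₀ (hpos k).ne']
      rw [h3, norm_smul, Real.norm_eq_abs, abs_of_pos (hpos k)]
    rwa [h2] at h1
  have hδpos : ∀ k, 0 < δ k := by
    intro k
    by_contra h
    push_neg at h
    nlinarith [hkey k, hpos k]
  have htop : Tendsto (fun k => ‖ω k‖) atTop atTop := by
    have h1 : Tendsto δ atTop (𝓝[>] 0) :=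
      tendsto_nhdsWithin_of_tendsto_nhds_of_eventually_within _ hδ0
        (Eventually.of_forall hδpos)
    have h2 : Tendsto (fun k => (δ k)⁻¹) atTop atTop :=
      tendsto_inv_nhdsGT_zero.comp h1
    have h3 : Tendsto (fun k => ε * (δ k)⁻¹) atTop atTop :=
      h2.const_mul_atTop hε
    refine tendsto_atTop_mono (fun k => ?_) h3
    rw [← div_eq_mul_inv]
    exact (div_le_iff₀ (hδpos k)).2 (by linarith [hkey k])
  refine ⟨htop, ?_⟩
  set g : ℕ → EuclideanSpace ℝ (Fin 2) := fun k => ‖ω k‖⁻¹ • (ω k - d) with hgdef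
  have hg : Tendsto g atTop (𝓝 e₀) := by
    have h0 : Tendsto (fun k => ‖ω k‖⁻¹) atTop (𝓝 0) := htop.inv_tendsto_atTop
    have h1 : Tendsto (fun k => ‖ω k‖⁻¹ • d) atTop
        (𝓝 (0 : EuclideanSpace ℝ (Fin 2))) := by
      simpa using h0.smul_const d
    have h2 := hconv.sub h1
    simpa [hgdef, smul_sub] using h2
  have hgnorm : Tendsto (fun k => ‖g k‖) atTop (𝓝 1) := by
    simpa [he₀] using hg.norm
  have heq : ∀ k, ‖ω k - d‖⁻¹ • (ω k - d) = ‖g k‖⁻¹ • g k := by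
    intro k
    have hωd : ω k - d = ‖ω k‖ • g k := (smul_inv_smul₀ (hpos k).ne' _).symm
    rw [hωd, norm_smul, Real.norm_eq_abs, abs_of_pos (hpos k), mul_inv,
      mul_comm, mul_smul, inv_smul_smul₀ (hpos k).ne']
  have hinv : Tendsto (fun k => ‖g k‖⁻¹) atTop (𝓝 1) := by
    simpa using hgnorm.inv₀ one_ne_zero
  have hvec : Tendsto (fun k => ‖ω k - d‖⁻¹ • (ω k - d)) atTop (𝓝 e₀) := by
    have := hinv.smul hg
    rw [one_smul] at this
    exact this.congr fun k => (heq k).symm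
  have hfin : Tendsto (fun k => (inner ℝ e₀ (‖ω k - d‖⁻¹ • (ω k - d)) : ℝ))
      atTop (𝓝 (inner ℝ e₀ e₀ : ℝ)) :=
    (tendsto_const_nhds (x := e₀) (f := atTop)).inner hvec
  have h1 : (inner ℝ e₀ e₀ : ℝ) = 1 := by
    rw [real_inner_self_eq_norm_sq, he₀]; norm_num
  rwa [h1] at hfin
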